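/- Let J > 0 and let 0 < P₁ < P₂ < S₂ < S₁ satisfy J(S₂ − P₂) = −(S₁ − P₁) + log(S₁/P₁) and J(S₁ − P₁) = −(S₂ − P₂) + log(S₂/P₂). Then (1/P₁ − 1)(1/P₂ − 1) + (1/S₁ − 1)(1/S₂ − 1) ≥ 2J². -/

import Mathlib

open Real

lemma log_le_half {x : ℝ} (hx : 1 ≤ x) : Real.log x ≤ (x - 1/x)/2 := by
  set f : ℝ → ℝ := fun t => (t - 1/t)/2 - Real.log t with hf
  have hderiv : ∀ t : ℝ, 0 < t → HasDerivAt f ((1 + 1/t^2)/2 - 1/t) t := by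
    intro t ht0
    have h1 : HasDerivAt (fun t : ℝ => t - 1/t) (1 + 1/t^2) t := by
      have := (hasDerivAt_id t).sub ((hasDerivAt_id t).inv (ne_of_gt ht0))
      rw [show ((id : ℝ → ℝ) - id⁻¹) = fun t : ℝ => t - 1/t by funext y; simp [one_div]] at this
      exact this.congr_deriv (by simp only [id]; ring)
    have h2 := (h1.div_const 2).sub (Real.hasDerivAt_log (ne_of_gt ht0))
    rw [show ((fun x : ℝ => (x - 1/x)/2) - Real.log) = f from rfl] at h2
    exact h2.congr_deriv (by ring)
  have hmono : MonotoneOn f (Set.Ici (1:ℝ)) := by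
    apply monotoneOn_of_deriv_nonneg (convex_Ici 1)
    · intro t ht
      have ht0 : (0:ℝ) < t := lt_of_lt_of_le one_pos ht
      exact (hderiv t ht0).continuousAt.continuousWithinAt
    · intro t ht
      rw [interior_Ici] at ht
      have ht0 : (0:ℝ) < t := lt_trans one_pos ht
      exact ((hderiv t ht0).differentiableAt).differentiableWithinAt
    · intro t ht
      rw [interior_Ici] at ht
      have ht0 : (0:ℝ) < t := lt_trans one_pos ht
      rw [(hderiv t ht0).deriv]
      have key : 1/t ≤ (1 + 1/t^2)/2 := by
        have e1 : (0:ℝ) ≤ (t-1)^2/t := by positivity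
        have e2 : (t-1)^2/t = t - 2 + 1/t := by field_simp; ring
        have e3 : 1/t^2 * t = 1/t := by field_simp
        rw [div_le_div_iff₀ ht0 (by norm_num : (0:ℝ) < 2)]
        nlinarith
      linarith
  have h1 := hmono Set.self_mem_Ici hx hx
  have hx0 : (0:ℝ) < x := lt_of_lt_of_le one_pos hx
  simp only [f] at h1
  norm_num at h1
  rw [one_div]
  linarith
/-- if J > 0 and 0 < P₁ < P₂ < S₂ < S₁ satisfy
J(S₂ − P₂) = −(S₁ − P₁) + log(S₁/P₁) and J(S₁ − P₁) = −(S₂ − P₂) + log(S₂/P₂),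
then (1/P₁ − 1)(1/P₂ − 1) + (1/S₁ − 1)(1/S₂ − 1) ≥ 2J². -/
theorem stmt_19 (J P₁ P₂ S₂ S₁ : ℝ) (hJ : 0 < J)
    (hP₁ : 0 < P₁) (h₁₂ : P₁ < P₂) (h₂₃ : P₂ < S₂) (h₃₄ : S₂ < S₁)
    (hA : J * (S₂ - P₂) = -(S₁ - P₁) + Real.log (S₁ / P₁))
    (hB : J * (S₁ - P₁) = -(S₂ - P₂) + Real.log (S₂ / P₂)) :
    2 * J ^ 2 ≤ (1 / P₁ - 1) * (1 / P₂ - 1) + (1 / S₁ - 1) * (1 / S₂ - 1) := by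

  have hP₂ : 0 < P₂ := hP₁.trans h₁₂
  have hS₂ : 0 < S₂ := hP₂.trans h₂₃
  have hS₁ : 0 < S₁ := hS₂.trans h₃₄
  have ha : 0 < S₁ - P₁ := by linarith
  have hb : 0 < S₂ - P₂ := by linarith
  -- log bounds
  have hx₁ : (1:ℝ) ≤ S₁ / P₁ := by rw [le_div_iff₀ hP₁]; linarith
  have hx₂ : (1:ℝ) ≤ S₂ / P₂ := by rw [le_div_iff₀ hP₂]; linarith
  have hl₁ : Real.log (S₁ / P₁) ≤ (S₁ - P₁) * (1/P₁ + 1/S₁) / 2 := by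
    have := log_le_half hx₁
    have e : (S₁/P₁ - 1/(S₁/P₁))/2 = (S₁ - P₁) * (1/P₁ + 1/S₁) / 2 := by
      field_simp; ring
    linarith [e ▸ this]
  have hl₂ : Real.log (S₂ / P₂) ≤ (S₂ - P₂) * (1/P₂ + 1/S₂) / 2 := by
    have := log_le_half hx₂
    have e : (S₂/P₂ - 1/(S₂/P₂))/2 = (S₂ - P₂) * (1/P₂ + 1/S₂) / 2 := by
      field_simp; ring
    linarith [e ▸ this]
  set C₁ : ℝ := (1/P₁ + 1/S₁) / 2 - 1 with hC₁
  set C₂ : ℝ := (1/P₂ + 1/S₂) / 2 - 1 with hC₂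
  have h1 : J * (S₂ - P₂) ≤ (S₁ - P₁) * C₁ := by
    rw [hA, hC₁]
    have e : (S₁ - P₁) * ((1/P₁ + 1/S₁)/2 - 1)
        = -(S₁ - P₁) + (S₁ - P₁) * (1/P₁ + 1/S₁) / 2 := by ring
    rw [e]; linarith [hl₁]
  have h2 : J * (S₁ - P₁) ≤ (S₂ - P₂) * C₂ := by
    rw [hB, hC₂]
    have e : (S₂ - P₂) * ((1/P₂ + 1/S₂)/2 - 1)
        = -(S₂ - P₂) + (S₂ - P₂) * (1/P₂ + 1/S₂) / 2 := by ring
    rw [e]; linarith [hl₂]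
  have hpos1 : 0 < J * (S₂ - P₂) := mul_pos hJ hb
  have hpos2 : 0 < J * (S₁ - P₁) := mul_pos hJ ha
  have hm : (J * (S₂ - P₂)) * (J * (S₁ - P₁)) ≤ ((S₁ - P₁) * C₁) * ((S₂ - P₂) * C₂) :=
    mul_le_mul h1 h2 hpos2.le (hpos1.le.trans h1)
  have hC : J ^ 2 ≤ C₁ * C₂ := by
    have hab : 0 < (S₁ - P₁) * (S₂ - P₂) := mul_pos ha hb
    nlinarith [hm]
  have hD : 0 ≤ (1/P₁ - 1/S₁) * (1/P₂ - 1/S₂) := by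
    have d1 : 1/S₁ ≤ 1/P₁ := by
      apply div_le_div_of_nonneg_left (by norm_num) hP₁ ; linarith
    have d2 : 1/S₂ ≤ 1/P₂ := by
      apply div_le_div_of_nonneg_left (by norm_num) hP₂ ; linarith
    exact mul_nonneg (by linarith) (by linarith)
  rw [hC₁, hC₂] at hC
  nlinarith [hC, hD]
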